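/- arXiv:1509.04190 — 3 statements merged into one kernel-verified Lean document; each statement's English description precedes it below -/
import Mathlib

section
/- For integers n ≥ k ≥ 0 and sequences (x_i), (y_i), the Bell polynomials of the second kind satisfy the addition formula B_{n,k}(x_1+y_1, …, x_{n−k+1}+y_{n−k+1}) = Σ_{r+s=k} Σ_{ℓ+m=n} C(n,ℓ) B_{ℓ,r}(x_1,…,x_{ℓ−r+1}) B_{m,s}(y_1,…,y_{m−s+1}). -/
open Finset

namespace BellAux

/-- total number of parts -/
def S (g : ℕ →₀ ℕ) : ℕ := g.sum fun _ a => a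
/-- total weight -/
def W (g : ℕ →₀ ℕ) : ℕ := g.sum fun i a => (i + 1) * a

def BB (ℓ r : ℕ) : Finset (ℕ →₀ ℕ) :=
  (Finset.finsuppAntidiag (Finset.range (ℓ + 1)) r).filter fun g => W g = ℓ

lemma S_le_W (g : ℕ →₀ ℕ) : S g ≤ W g := by
  refine Finset.sum_le_sum fun i _ => ?_
  exact Nat.le_mul_of_pos_left _ (Nat.succ_pos i)

lemma term_le_W (g : ℕ →₀ ℕ) (i : ℕ) : (i + 1) * g i ≤ W g := by
  by_cases h : g i = 0
  · simp [h]
  · exact Finset.single_le_sum (f := fun j => (j + 1) * g j) (fun j _ => Nat.zero_le _)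
      (Finsupp.mem_support_iff.mpr h)

lemma apply_le_W (g : ℕ →₀ ℕ) (i : ℕ) : g i ≤ W g :=
  le_trans (Nat.le_mul_of_pos_left _ (Nat.succ_pos i)) (term_le_W g i)

lemma W_eq_add (g : ℕ →₀ ℕ) : W g = (g.sum fun i a => i * a) + S g := by
  rw [W, S, ← Finsupp.sum_add]
  exact Finsupp.sum_congr fun i _ => by ring

lemma support_subset_of_W (g : ℕ →₀ ℕ) {n : ℕ} (h : W g = n) :
    g.support ⊆ Finset.range (n + 1) := by
  intro i hi
  rw [Finset.mem_range]
  have h1 : (i + 1) * g i ≤ n := h ▸ term_le_W g i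
  have h2 : 1 ≤ g i := Nat.one_le_iff_ne_zero.mpr (Finsupp.mem_support_iff.mp hi)
  nlinarith

lemma mem_BB {g : ℕ →₀ ℕ} {ℓ r : ℕ} : g ∈ BB ℓ r ↔ S g = r ∧ W g = ℓ := by
  rw [BB, Finset.mem_filter, Finset.mem_finsuppAntidiag]
  constructor
  · rintro ⟨⟨hsum, hsupp⟩, hW⟩
    refine ⟨?_, hW⟩
    rw [S, Finsupp.sum_of_support_subset g hsupp _ (fun _ _ => rfl)]
    exact hsum
  · rintro ⟨hS, hW⟩
    have hsupp := support_subset_of_W g hW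
    refine ⟨⟨?_, hsupp⟩, hW⟩
    rw [← hS, S, Finsupp.sum_of_support_subset g hsupp _ (fun _ _ => rfl)]

lemma S_add (a b : ℕ →₀ ℕ) : S (a + b) = S a + S b :=
  Finsupp.sum_add_index' (fun _ => rfl) (fun _ _ _ => rfl)

lemma W_add (a b : ℕ →₀ ℕ) : W (a + b) = W a + W b :=
  Finsupp.sum_add_index' (fun i => by simp) (fun i b₁ b₂ => by ring)

end BellAux
namespace BellAux

noncomputable def toF {L M : ℕ} (f : Fin L → Fin M) : ℕ →₀ ℕ :=
  Finsupp.onFinset (Finset.range L) (fun j => if h : j < L then (f ⟨j, h⟩ : ℕ) else 0)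
    (fun a ha => by
      rw [Finset.mem_range]
      by_contra h
      simp [h] at ha)

lemma toF_apply_lt {L M : ℕ} (f : Fin L → Fin M) {j : ℕ} (h : j < L) :
    toF f j = f ⟨j, h⟩ := by
  simp [toF, h]

lemma toF_apply_ge {L M : ℕ} (f : Fin L → Fin M) {j : ℕ} (h : ¬ j < L) :
    toF f j = 0 := by
  simp [toF, h]

lemma toF_sum {α : Type*} [AddCommMonoid α] {L M : ℕ} (f : Fin L → Fin M)
    (h : ℕ → ℕ → α) (h0 : ∀ j, h j 0 = 0) :
    (toF f).sum h = ∑ i : Fin L, h i (f i) := by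
  rw [Finsupp.sum_of_support_subset (toF f) (Finsupp.support_onFinset_subset) _
    (fun i _ => h0 i)]
  rw [← Fin.sum_univ_eq_sum_range (fun j => h j (toF f j)) L]
  refine Finset.sum_congr rfl fun i _ => ?_
  rw [toF_apply_lt f i.isLt]

lemma toF_prod {α : Type*} [CommMonoid α] {L M : ℕ} (f : Fin L → Fin M)
    (h : ℕ → ℕ → α) (h0 : ∀ j, h j 0 = 1) :
    (toF f).prod h = ∏ i : Fin L, h i (f i) := by
  rw [Finsupp.prod_of_support_subset (toF f) (Finsupp.support_onFinset_subset) _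
    (fun i _ => h0 i)]
  rw [← Fin.prod_univ_eq_prod_range (fun j => h j (toF f j)) L]
  refine Finset.prod_congr rfl fun i _ => ?_
  rw [toF_apply_lt f i.isLt]

end BellAux

namespace BellAux

lemma supp_BB {g : ℕ →₀ ℕ} {ℓ r : ℕ} (hg : g ∈ BB ℓ r) :
    g.support ⊆ Finset.range (ℓ - r + 1) := by
  obtain ⟨hS, hW⟩ := mem_BB.mp hg
  have hW' : (g.sum fun i a => i * a) + r = ℓ := by
    rw [← hS, ← W_eq_add, hW]
  intro i hi
  have h1 : i * g i ≤ g.sum fun j a => j * a :=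
    Finset.single_le_sum (f := fun j => j * g j) (fun j _ => Nat.zero_le _) hi
  have h2 : 1 ≤ g i := Nat.one_le_iff_ne_zero.mpr (Finsupp.mem_support_iff.mp hi)
  have h3 : i ≤ i * g i := Nat.le_mul_of_pos_right _ h2
  have h4 : i + r ≤ ℓ := by
    calc i + r ≤ (g.sum fun j a => j * a) + r := by
          exact Nat.add_le_add_right (le_trans h3 h1) r
      _ = ℓ := hW'
  rw [Finset.mem_range]
  omega

end BellAux

/-- The Bell polynomial of the second kind `B_{n,k}(x 1, …, x (n-k+1))`. -/
noncomputable def bell (n k : ℕ) (x : ℕ → ℂ) : ℂ :=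
  ∑ ℓ : Fin (n - k + 1) → Fin (n + 1),
    if (∑ i : Fin (n - k + 1), (ℓ i : ℕ)) = k ∧
        (∑ i : Fin (n - k + 1), ((i : ℕ) + 1) * (ℓ i : ℕ)) = n then
      (n.factorial : ℂ) / (∏ i : Fin (n - k + 1), ((ℓ i : ℕ).factorial : ℂ)) *
        ∏ i : Fin (n - k + 1), (x ((i : ℕ) + 1) / ((((i : ℕ) + 1).factorial : ℕ) : ℂ)) ^ (ℓ i : ℕ)
    else 0

namespace BellAux

lemma bell_eq (ℓ r : ℕ) (x : ℕ → ℂ) :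
    bell ℓ r x = ∑ g ∈ BB ℓ r,
      (ℓ.factorial : ℂ) / (g.prod fun _ a => (a.factorial : ℂ)) *
        g.prod fun i a => (x (i + 1) / ((i + 1).factorial : ℂ)) ^ a := by
  rw [bell, ← Finset.sum_filter]
  refine Finset.sum_nbij' (i := fun f => toF f)
    (j := fun g i => (⟨min (g (i : ℕ)) ℓ, by omega⟩ : Fin (ℓ + 1))) ?_ ?_ ?_ ?_ ?_
  · intro f hf
    rw [Finset.mem_filter] at hf
    obtain ⟨-, h1, h2⟩ := hf
    refine mem_BB.mpr ⟨?_, ?_⟩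
    · rw [S, toF_sum f _ (fun j => rfl)]; exact h1
    · rw [W, toF_sum f _ (fun j => by simp)]; exact h2
  · intro g hg
    obtain ⟨hS, hW⟩ := mem_BB.mp hg
    have hle : ∀ j : ℕ, g j ≤ ℓ := fun j => hW ▸ apply_le_W g j
    have hsupp := supp_BB hg
    rw [Finset.mem_filter]
    refine ⟨Finset.mem_univ _, ?_, ?_⟩
    · have : ∀ i : Fin (ℓ - r + 1), ((⟨min (g (i : ℕ)) ℓ, by omega⟩ : Fin (ℓ + 1)) : ℕ) = g i := by
        intro i; simp [Nat.min_eq_left (hle i)]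
      have hh := Finsupp.sum_of_support_subset g hsupp (fun _ a => a) (fun _ _ => rfl)
      rw [Fintype.sum_congr _ _ this, Fin.sum_univ_eq_sum_range (fun j => g j), ← hh]
      exact hS
    · have : ∀ i : Fin (ℓ - r + 1), ((i : ℕ) + 1) *
          ((⟨min (g (i : ℕ)) ℓ, by omega⟩ : Fin (ℓ + 1)) : ℕ) = ((i : ℕ) + 1) * g i := by
        intro i; simp [Nat.min_eq_left (hle i)]
      have hh := Finsupp.sum_of_support_subset g hsupp (fun i a => (i + 1) * a)
        (fun _ _ => by simp)
      rw [Fintype.sum_congr _ _ this, Fin.sum_univ_eq_sum_range (fun j => (j + 1) * g j), ← hh]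
      exact hW
  · intro f hf
    funext i
    ext
    have h1 : toF f (i : ℕ) = f i := by rw [toF_apply_lt f i.isLt]
    simp only [h1]
    exact Nat.min_eq_left (Nat.lt_succ_iff.mp (f i).isLt)
  · intro g hg
    obtain ⟨hS, hW⟩ := mem_BB.mp hg
    have hle : ∀ j : ℕ, g j ≤ ℓ := fun j => hW ▸ apply_le_W g j
    have hsupp := supp_BB hg
    ext j
    by_cases h : j < ℓ - r + 1
    · rw [toF_apply_lt _ h]
      simp [Nat.min_eq_left (hle j)]
    · rw [toF_apply_ge _ h]
      by_contra hc
      have : j ∈ g.support := Finsupp.mem_support_iff.mpr (fun h' => hc h'.symm)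
      have := hsupp this
      rw [Finset.mem_range] at this
      omega
  · intro f hf
    rw [toF_prod f _ (fun j => by simp), toF_prod f _ (fun j => by simp)]

end BellAux

namespace BellAux


lemma erase_eq_self_of_apply_eq_zero {g : ℕ →₀ ℕ} {j : ℕ} (h : g j = 0) :
    g.erase j = g := by
  ext i
  rcases eq_or_ne i j with rfl | hij
  · rw [Finsupp.erase_same, h]
  · rw [Finsupp.erase_ne hij]

lemma prod_add_pow (u v : ℕ → ℂ) (s : Finset ℕ) :
    ∀ g : ℕ →₀ ℕ, g.support ⊆ s →
      (∏ i ∈ s, (u i + v i) ^ g i) =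
        ∑ p ∈ Finset.HasAntidiagonal.antidiagonal g,
          (∏ i ∈ s, (Nat.choose (g i) (p.1 i) : ℂ)) *
            (∏ i ∈ s, u i ^ p.1 i) * (∏ i ∈ s, v i ^ p.2 i) := by
  induction s using Finset.induction with
  | empty =>
    intro g hg
    have hg0 : g = 0 := by
      ext i
      by_contra h
      exact absurd (hg (Finsupp.mem_support_iff.mpr h)) (Finset.notMem_empty i)
    subst hg0
    simp
  | @insert j t hjt ih =>
    intro g hg
    have hsupp' : (g.erase j).support ⊆ t := by
      intro i hi
      rw [Finsupp.support_erase, Finset.mem_erase] at hi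
      rcases Finset.mem_insert.mp (hg hi.2) with h | h
      · exact absurd h hi.1
      · exact h
    rw [Finset.prod_insert hjt]
    have hprod : (∏ i ∈ t, (u i + v i) ^ g i) = ∏ i ∈ t, (u i + v i) ^ (g.erase j) i :=
      Finset.prod_congr rfl fun i hi =>
        by rw [Finsupp.erase_ne (fun h : i = j => hjt (by rw [← h]; exact hi))]
    rw [hprod, ih (g.erase j) hsupp', add_pow, Finset.sum_mul_sum, ← Finset.sum_product']
    refine Finset.sum_nbij'
      (i := fun mq => (mq.2.1 + Finsupp.single j mq.1, mq.2.2 + Finsupp.single j (g j - mq.1)))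
      (j := fun p => (p.1 j, (p.1.erase j, p.2.erase j))) ?_ ?_ ?_ ?_ ?_
    · rintro ⟨m, q1, q2⟩ hmq
      rw [Finset.mem_product, Finset.mem_range, Nat.lt_succ_iff, Finset.HasAntidiagonal.mem_antidiagonal] at hmq
      obtain ⟨hm, hq⟩ := hmq
      simp only at hm hq
      rw [Finset.HasAntidiagonal.mem_antidiagonal]
      ext i
      have hqi := congrArg (fun f => f i) hq
      simp only [Finsupp.add_apply] at hqi ⊢
      rcases eq_or_ne i j with rfl | hij
      · rw [Finsupp.erase_same] at hqi
        simp only [Finsupp.single_eq_same]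
        omega
      · rw [Finsupp.erase_ne hij] at hqi
        rw [Finsupp.single_eq_of_ne hij, Finsupp.single_eq_of_ne hij]
        omega
    · rintro ⟨p1, p2⟩ hp
      rw [Finset.HasAntidiagonal.mem_antidiagonal] at hp
      rw [Finset.mem_product, Finset.mem_range, Nat.lt_succ_iff]
      constructor
      · show p1 j ≤ g j
        have := congrArg (fun f => f j) hp
        simp only [Finsupp.add_apply] at this
        omega
      · rw [Finset.HasAntidiagonal.mem_antidiagonal]
        simp only
        rw [← Finsupp.erase_add, hp]
    · rintro ⟨m, q1, q2⟩ hmq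
      rw [Finset.mem_product, Finset.HasAntidiagonal.mem_antidiagonal] at hmq
      obtain ⟨-, hq⟩ := hmq
      simp only at hq
      have hq1 : q1 j = 0 := by
        have := congrArg (fun f => f j) hq
        simp only [Finsupp.add_apply, Finsupp.erase_same] at this
        omega
      have hq2 : q2 j = 0 := by
        have := congrArg (fun f => f j) hq
        simp only [Finsupp.add_apply, Finsupp.erase_same] at this
        omega
      simp only [Prod.mk.injEq]
      refine ⟨?_, ?_, ?_⟩
      · simp [Finsupp.add_apply, hq1]
      · rw [Finsupp.erase_add, Finsupp.erase_single, add_zero,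
          erase_eq_self_of_apply_eq_zero hq1]
      · rw [Finsupp.erase_add, Finsupp.erase_single, add_zero,
          erase_eq_self_of_apply_eq_zero hq2]
    · rintro ⟨p1, p2⟩ hp
      rw [Finset.HasAntidiagonal.mem_antidiagonal] at hp
      have hpj : p1 j + p2 j = g j := by
        have := congrArg (fun f => f j) hp
        simpa [Finsupp.add_apply] using this
      simp only [Prod.mk.injEq]
      constructor
      · rw [Finsupp.erase_add_single]
      · have : g j - p1 j = p2 j := by omega
        rw [this, Finsupp.erase_add_single]
    · rintro ⟨m, q1, q2⟩ hmq
      rw [Finset.mem_product, Finset.mem_range, Nat.lt_succ_iff, Finset.HasAntidiagonal.mem_antidiagonal] at hmq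
      obtain ⟨hm, hq⟩ := hmq
      simp only at hm hq
      have hq1 : q1 j = 0 := by
        have := congrArg (fun f => f j) hq
        simp only [Finsupp.add_apply, Finsupp.erase_same] at this
        omega
      have hq2 : q2 j = 0 := by
        have := congrArg (fun f => f j) hq
        simp only [Finsupp.add_apply, Finsupp.erase_same] at this
        omega
      simp only
      rw [Finset.prod_insert hjt, Finset.prod_insert hjt, Finset.prod_insert hjt]
      have e1 : ∀ i ∈ t, ((q1 + Finsupp.single j m) i) = q1 i := by
        intro i hi
        have hij : i ≠ j := fun h => hjt (h ▸ hi)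
        simp [Finsupp.add_apply, Finsupp.single_eq_of_ne hij]
      have e2 : ∀ i ∈ t, ((q2 + Finsupp.single j (g j - m)) i) = q2 i := by
        intro i hi
        have hij : i ≠ j := fun h => hjt (h ▸ hi)
        simp [Finsupp.add_apply, Finsupp.single_eq_of_ne hij]
      have ej1 : (q1 + Finsupp.single j m) j = m := by
        simp [Finsupp.add_apply, hq1]
      have ej2 : (q2 + Finsupp.single j (g j - m)) j = g j - m := by
        simp [Finsupp.add_apply, hq2]
      have eg : ∀ i ∈ t, g i = (g.erase j) i := by
        intro i hi
        have hij : i ≠ j := fun h => hjt (h ▸ hi)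
        rw [Finsupp.erase_ne hij]
      have P1 : (∏ i ∈ t, u i ^ ((q1 + Finsupp.single j m) i)) = ∏ i ∈ t, u i ^ q1 i :=
        Finset.prod_congr rfl fun i hi => by rw [e1 i hi]
      have P2 : (∏ i ∈ t, v i ^ ((q2 + Finsupp.single j (g j - m)) i)) = ∏ i ∈ t, v i ^ q2 i :=
        Finset.prod_congr rfl fun i hi => by rw [e2 i hi]
      have P3 : (∏ i ∈ t, ((g i).choose ((q1 + Finsupp.single j m) i) : ℂ)) =
          ∏ i ∈ t, (((g.erase j) i).choose (q1 i) : ℂ) :=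
        Finset.prod_congr rfl fun i hi => by rw [e1 i hi, eg i hi]
      rw [ej1, ej2, P1, P2, P3]
      ring


end BellAux

namespace BellAux

noncomputable def A (x : ℕ → ℂ) (ℓ : ℕ) (g : ℕ →₀ ℕ) : ℂ :=
  (ℓ.factorial : ℂ) / (g.prod fun _ a => (a.factorial : ℂ)) *
    g.prod fun i a => (x (i + 1) / ((i + 1).factorial : ℂ)) ^ a

lemma bell_eq' (ℓ r : ℕ) (x : ℕ → ℂ) : bell ℓ r x = ∑ g ∈ BB ℓ r, A x ℓ g := by
  rw [bell_eq]
  exact Finset.sum_congr rfl fun g _ => by rw [A]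

lemma A_eq (x : ℕ → ℂ) (ℓ n : ℕ) (g : ℕ →₀ ℕ) (hs : g.support ⊆ Finset.range (n + 1)) :
    A x ℓ g = (ℓ.factorial : ℂ) / (∏ i ∈ Finset.range (n + 1), ((g i).factorial : ℂ)) *
      ∏ i ∈ Finset.range (n + 1), (x (i + 1) / ((i + 1).factorial : ℂ)) ^ g i := by
  rw [A, Finsupp.prod_of_support_subset g hs _ (fun i _ => by simp),
    Finsupp.prod_of_support_subset g hs _ (fun i _ => by simp)]

noncomputable def G (x y : ℕ → ℂ) (n : ℕ) (p : (ℕ →₀ ℕ) × (ℕ →₀ ℕ)) : ℂ :=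
  (n.choose (W p.1) : ℂ) * A x (W p.1) p.1 * A y (W p.2) p.2

noncomputable def Q (n k : ℕ) : Finset ((ℕ →₀ ℕ) × (ℕ →₀ ℕ)) :=
  (Finset.HasAntidiagonal.antidiagonal k ×ˢ Finset.HasAntidiagonal.antidiagonal n).biUnion fun z =>
    BB z.2.1 z.1.1 ×ˢ BB z.2.2 z.1.2

lemma mem_Q {n k : ℕ} {p : (ℕ →₀ ℕ) × (ℕ →₀ ℕ)} :
    p ∈ Q n k ↔ S p.1 + S p.2 = k ∧ W p.1 + W p.2 = n := by
  simp only [Q, Finset.mem_biUnion, Finset.mem_product, Finset.HasAntidiagonal.mem_antidiagonal]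
  constructor
  · rintro ⟨z, ⟨hk, hn⟩, hp1, hp2⟩
    obtain ⟨h1, h2⟩ := mem_BB.mp hp1
    obtain ⟨h3, h4⟩ := mem_BB.mp hp2
    exact ⟨by rw [h1, h3]; exact hk, by rw [h2, h4]; exact hn⟩
  · rintro ⟨h1, h2⟩
    exact ⟨((S p.1, S p.2), (W p.1, W p.2)), ⟨h1, h2⟩,
      mem_BB.mpr ⟨rfl, rfl⟩, mem_BB.mpr ⟨rfl, rfl⟩⟩

end BellAux

set_option maxHeartbeats 1000000 in
open BellAux in
theorem bell_add (n k : ℕ) (hkn : k ≤ n) (x y : ℕ → ℂ) :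
    bell n k (fun i => x i + y i) =
      ∑ rs ∈ Finset.HasAntidiagonal.antidiagonal k, ∑ lm ∈ Finset.HasAntidiagonal.antidiagonal n,
        (n.choose lm.1 : ℂ) * bell lm.1 rs.1 x * bell lm.2 rs.2 y := by
  classical
  have hdisj : (↑(Finset.HasAntidiagonal.antidiagonal k ×ˢ Finset.HasAntidiagonal.antidiagonal n) :
      Set ((ℕ × ℕ) × ℕ × ℕ)).PairwiseDisjoint
      (fun z : (ℕ × ℕ) × ℕ × ℕ => BB z.2.1 z.1.1 ×ˢ BB z.2.2 z.1.2) := by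
    intro z1 _ z2 _ hne
    refine Finset.disjoint_left.mpr fun p hp1 hp2 => hne ?_
    rw [Finset.mem_product] at hp1 hp2
    obtain ⟨ha1, hb1⟩ := hp1
    obtain ⟨ha2, hb2⟩ := hp2
    obtain ⟨hs1, hw1⟩ := mem_BB.mp ha1
    obtain ⟨hs2, hw2⟩ := mem_BB.mp hb1
    obtain ⟨hs3, hw3⟩ := mem_BB.mp ha2
    obtain ⟨hs4, hw4⟩ := mem_BB.mp hb2
    have : z1.1 = z2.1 := Prod.ext (by omega) (by omega)
    have : z1.2 = z2.2 := Prod.ext (by omega) (by omega)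
    exact Prod.ext ‹z1.1 = z2.1› ‹z1.2 = z2.2›
  have RHSeq : (∑ rs ∈ Finset.HasAntidiagonal.antidiagonal k, ∑ lm ∈ Finset.HasAntidiagonal.antidiagonal n,
      (n.choose lm.1 : ℂ) * bell lm.1 rs.1 x * bell lm.2 rs.2 y) =
      ∑ p ∈ Q n k, G x y n p := by
    rw [← Finset.sum_product', Q, Finset.sum_biUnion hdisj]
    refine Finset.sum_congr rfl fun z _ => ?_
    rw [bell_eq' z.2.1 z.1.1 x, bell_eq' z.2.2 z.1.2 y, Finset.sum_product,
      mul_assoc, Finset.sum_mul_sum, Finset.mul_sum]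
    refine Finset.sum_congr rfl fun a ha => ?_
    rw [Finset.mul_sum]
    refine Finset.sum_congr rfl fun b hb => ?_
    have hw1 : W a = z.2.1 := (mem_BB.mp ha).2
    have hw2 : W b = z.2.2 := (mem_BB.mp hb).2
    rw [G]
    simp only [hw1, hw2]
    ring
  rw [RHSeq, bell_eq']
  have hmap : ∀ p ∈ Q n k, p.1 + p.2 ∈ BB n k := by
    intro p hp
    obtain ⟨h1, h2⟩ := mem_Q.mp hp
    exact mem_BB.mpr ⟨by rw [S_add]; exact h1, by rw [W_add]; exact h2⟩
  rw [← Finset.sum_fiberwise_of_maps_to hmap (G x y n)]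
  refine Finset.sum_congr rfl fun g hg => ?_
  obtain ⟨hS, hW⟩ := mem_BB.mp hg
  have hfe : (Q n k).filter (fun p => p.1 + p.2 = g) = Finset.HasAntidiagonal.antidiagonal g := by
    ext p
    rw [Finset.mem_filter, Finset.HasAntidiagonal.mem_antidiagonal, mem_Q]
    constructor
    · rintro ⟨-, h⟩; exact h
    · intro h
      refine ⟨⟨?_, ?_⟩, h⟩
      · rw [← S_add, h, hS]
      · rw [← W_add, h, hW]
  rw [hfe]
  have hsupp : g.support ⊆ Finset.range (n + 1) := support_subset_of_W g hW
  rw [A_eq _ n n g hsupp]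
  have huv : (∏ i ∈ Finset.range (n + 1),
      ((fun i => x i + y i) (i + 1) / ((i + 1).factorial : ℂ)) ^ g i) =
      ∏ i ∈ Finset.range (n + 1),
        ((fun j => x (j + 1) / ((j + 1).factorial : ℂ)) i +
          (fun j => y (j + 1) / ((j + 1).factorial : ℂ)) i) ^ g i :=
    Finset.prod_congr rfl fun i _ => by simp only; rw [add_div]
  rw [huv, prod_add_pow (fun j => x (j + 1) / ((j + 1).factorial : ℂ))
    (fun j => y (j + 1) / ((j + 1).factorial : ℂ)) _ g hsupp, Finset.mul_sum]
  refine Finset.sum_congr rfl fun p hp => ?_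
  rw [Finset.HasAntidiagonal.mem_antidiagonal] at hp
  have hsupp1 : p.1.support ⊆ Finset.range (n + 1) := by
    intro i hi
    refine hsupp ?_
    rw [Finsupp.mem_support_iff] at hi ⊢
    have := congrArg (fun f => f i) hp
    simp only [Finsupp.add_apply] at this
    omega
  have hsupp2 : p.2.support ⊆ Finset.range (n + 1) := by
    intro i hi
    refine hsupp ?_
    rw [Finsupp.mem_support_iff] at hi ⊢
    have := congrArg (fun f => f i) hp
    simp only [Finsupp.add_apply] at this
    omega
  have hlm : W p.1 + W p.2 = n := by rw [← W_add, hp, hW]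
  rw [G, A_eq x (W p.1) n p.1 hsupp1, A_eq y (W p.2) n p.2 hsupp2]
  -- scalar identity
  have hchoose : (∏ i ∈ Finset.range (n + 1), ((g i).choose (p.1 i) : ℂ)) =
      (∏ i ∈ Finset.range (n + 1), ((g i).factorial : ℂ)) /
        ((∏ i ∈ Finset.range (n + 1), ((p.1 i).factorial : ℂ)) *
          (∏ i ∈ Finset.range (n + 1), ((p.2 i).factorial : ℂ))) := by
    rw [← Finset.prod_mul_distrib, ← Finset.prod_div_distrib]
    refine Finset.prod_congr rfl fun i _ => ?_
    have hpi : p.1 i + p.2 i = g i := by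
      have := congrArg (fun f => f i) hp
      simpa [Finsupp.add_apply] using this
    have h1 : p.1 i ≤ g i := by omega
    have h2 : g i - p.1 i = p.2 i := by omega
    rw [eq_div_iff (by
      refine mul_ne_zero ?_ ?_ <;>
      exact Nat.cast_ne_zero.mpr (Nat.factorial_ne_zero _))]
    have := Nat.choose_mul_factorial_mul_factorial h1
    rw [h2] at this
    push_cast [← this]
    ring
  have hcn : ((n.choose (W p.1)) : ℂ) =
      (n.factorial : ℂ) / (((W p.1).factorial : ℂ) * ((W p.2).factorial : ℂ)) := by
    have h1 : W p.1 ≤ n := by omega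
    have h2 : n - W p.1 = W p.2 := by omega
    rw [eq_div_iff (by
      refine mul_ne_zero ?_ ?_ <;>
      exact Nat.cast_ne_zero.mpr (Nat.factorial_ne_zero _))]
    have := Nat.choose_mul_factorial_mul_factorial h1
    rw [h2] at this
    push_cast [← this]
    ring
  rw [hchoose, hcn]
  have ne1 : (∏ i ∈ Finset.range (n + 1), ((g i).factorial : ℂ)) ≠ 0 :=
    Finset.prod_ne_zero_iff.mpr fun i _ => Nat.cast_ne_zero.mpr (Nat.factorial_ne_zero _)
  have ne2 : (∏ i ∈ Finset.range (n + 1), ((p.1 i).factorial : ℂ)) ≠ 0 :=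
    Finset.prod_ne_zero_iff.mpr fun i _ => Nat.cast_ne_zero.mpr (Nat.factorial_ne_zero _)
  have ne3 : (∏ i ∈ Finset.range (n + 1), ((p.2 i).factorial : ℂ)) ≠ 0 :=
    Finset.prod_ne_zero_iff.mpr fun i _ => Nat.cast_ne_zero.mpr (Nat.factorial_ne_zero _)
  have ne4 : ((W p.1).factorial : ℂ) ≠ 0 := Nat.cast_ne_zero.mpr (Nat.factorial_ne_zero _)
  have ne5 : ((W p.2).factorial : ℂ) ≠ 0 := Nat.cast_ne_zero.mpr (Nat.factorial_ne_zero _)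
  have ne6 : (∏ i ∈ Finset.range (n + 1), (((i + 1).factorial : ℂ)) ^ p.1 i) ≠ 0 :=
    Finset.prod_ne_zero_iff.mpr fun i _ =>
      pow_ne_zero _ (Nat.cast_ne_zero.mpr (Nat.factorial_ne_zero _))
  have ne7 : (∏ i ∈ Finset.range (n + 1), (((i + 1).factorial : ℂ)) ^ p.2 i) ≠ 0 :=
    Finset.prod_ne_zero_iff.mpr fun i _ =>
      pow_ne_zero _ (Nat.cast_ne_zero.mpr (Nat.factorial_ne_zero _))
  field_simp
end

section
/- Let μ and ν be n-times differentiable functions on an interval with ν(x) ≠ 0. Then the n-th derivative of μ/ν at x equals ((-1)^n/ν(x)^{n+1}) times the determinant of the (n+1)×(n+1) matrix whose first column is (μ(x), μ'(x), …, μ^{(n)}(x))^T and whose (ℓ, m)-entry in the remaining columns (0 ≤ ℓ ≤ n, 0 ≤ m ≤ n−1) is C(ℓ, m) ν^{(ℓ−m)}(x), with the convention that these entries vanish for ℓ < m. -/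
open Finset
open scoped Matrix

private lemma iteratedDeriv_add'' {n : ℕ} {f g : ℝ → ℝ} (hf : ContDiff ℝ n f)
    (hg : ContDiff ℝ n g) (x : ℝ) :
    iteratedDeriv n (fun t => f t + g t) x = iteratedDeriv n f x + iteratedDeriv n g x := by
  simp only [iteratedDeriv_eq_iteratedFDeriv]
  rw [show (fun t => f t + g t) = f + g from rfl, iteratedFDeriv_add_apply hf.contDiffAt hg.contDiffAt]
  simp

private lemma leibniz_iteratedDeriv : ∀ (n : ℕ) (f g : ℝ → ℝ), ContDiff ℝ n f → ContDiff ℝ n g →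
    ∀ x : ℝ, iteratedDeriv n (fun t => f t * g t) x =
      ∑ k ∈ Finset.range (n + 1),
        (n.choose k : ℝ) * (iteratedDeriv k f x * iteratedDeriv (n - k) g x)
  | 0, f, g, _, _, x => by simp
  | (n+1), f, g, hf, hg, x => by
    have hf1 : ContDiff ℝ ((n : WithTop ℕ∞) + 1) f := by exact_mod_cast hf
    have hg1 : ContDiff ℝ ((n : WithTop ℕ∞) + 1) g := by exact_mod_cast hg
    have hfd : Differentiable ℝ f := hf1.differentiable (by simp)
    have hgd : Differentiable ℝ g := hg1.differentiable (by simp)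
    have hf' : ContDiff ℝ n (deriv f) := (contDiff_succ_iff_deriv.mp hf1).2.2
    have hg' : ContDiff ℝ n (deriv g) := (contDiff_succ_iff_deriv.mp hg1).2.2
    have hfn : ContDiff ℝ n f := hf1.of_le le_self_add
    have hgn : ContDiff ℝ n g := hg1.of_le le_self_add
    have hderiv : deriv (fun t => f t * g t) = fun t => deriv f t * g t + f t * deriv g t := by
      funext t; exact deriv_mul (hfd t) (hgd t)
    rw [iteratedDeriv_succ', hderiv, iteratedDeriv_add'' (hf'.mul hgn) (hfn.mul hg'),
      leibniz_iteratedDeriv n _ _ hf' hgn, leibniz_iteratedDeriv n _ _ hfn hg']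
    have e1 : ∀ k, iteratedDeriv k (deriv f) x = iteratedDeriv (k+1) f x := fun k => by
      rw [iteratedDeriv_succ']
    have e2 : ∀ k, iteratedDeriv k (deriv g) x = iteratedDeriv (k+1) g x := fun k => by
      rw [iteratedDeriv_succ']
    simp only [e1, e2]
    have h2 : ∀ k ∈ Finset.range (n+1),
        (n.choose k : ℝ) * (iteratedDeriv k f x * iteratedDeriv (n - k + 1) g x)
          = (n.choose k : ℝ) * (iteratedDeriv k f x * iteratedDeriv (n + 1 - k) g x) := by
      intro k hk
      rw [Finset.mem_range] at hk
      have : n - k + 1 = n + 1 - k := by omega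
      rw [this]
    rw [Finset.sum_congr rfl h2]
    rw [Finset.sum_range_succ' (fun k => ((n+1).choose k : ℝ) *
      (iteratedDeriv k f x * iteratedDeriv (n + 1 - k) g x)) (n+1)]
    simp only [Nat.succ_sub_succ, Nat.choose_succ_succ, Nat.cast_add, add_mul,
      Nat.choose_zero_right, Nat.cast_one, one_mul, Nat.sub_zero]
    rw [Finset.sum_add_distrib]
    rw [Finset.sum_range_succ' (fun k => ((n).choose k : ℝ) *
      (iteratedDeriv k f x * iteratedDeriv (n + 1 - k) g x)) n]
    rw [Finset.sum_range_succ (fun k => ((n).choose (k+1) : ℝ) *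
      (iteratedDeriv (k+1) f x * iteratedDeriv (n - k) g x)) n]
    simp only [Nat.choose_succ_self, Nat.cast_zero, zero_mul, add_zero, Nat.succ_sub_succ,
      Nat.choose_zero_right, Nat.cast_one, one_mul, Nat.sub_zero, iteratedDeriv_zero]
    ring

private lemma cramer_like {n : ℕ} (M : Matrix (Fin (n+1)) (Fin (n+1)) ℝ) (v : Fin (n+1) → ℝ) :
    (M.updateCol (Fin.last n) (M *ᵥ v)).det = M.det * v (Fin.last n) := by
  rw [← Matrix.cramer_apply, Matrix.cramer_eq_adjugate_mulVec, Matrix.mulVec_mulVec,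
    Matrix.adjugate_mul, Matrix.smul_mulVec, Matrix.one_mulVec]
  simp

theorem deriv_quotient_det (n : ℕ) (μ ν : ℝ → ℝ)
    (hμ : ContDiff ℝ n μ) (hν : ContDiff ℝ n ν) (hne : ∀ x, ν x ≠ 0) (x : ℝ) :
    iteratedDeriv n (fun t => μ t / ν t) x =
      ((-1 : ℝ) ^ n / ν x ^ (n + 1)) *
        Matrix.det (Matrix.of fun i j : Fin (n + 1) =>
          if (j : ℕ) = 0 then iteratedDeriv (i : ℕ) μ x
          else ((i : ℕ).choose ((j : ℕ) - 1) : ℝ) *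
            iteratedDeriv ((i : ℕ) - ((j : ℕ) - 1)) ν x) := by
  have hfC : ContDiff ℝ n (fun t => μ t / ν t) := hμ.div hν hne
  set G : Matrix (Fin (n+1)) (Fin (n+1)) ℝ := Matrix.of fun i j : Fin (n + 1) =>
      if (j : ℕ) = 0 then iteratedDeriv (i : ℕ) μ x
      else ((i : ℕ).choose ((j : ℕ) - 1) : ℝ) *
        iteratedDeriv ((i : ℕ) - ((j : ℕ) - 1)) ν x with hG
  set M : Matrix (Fin (n+1)) (Fin (n+1)) ℝ :=
    fun i j => ((i : ℕ).choose (j : ℕ) : ℝ) * iteratedDeriv ((i : ℕ) - (j : ℕ)) ν x with hM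
  set v : Fin (n+1) → ℝ := fun j => iteratedDeriv (j : ℕ) (fun t => μ t / ν t) x with hv
  set b : Fin (n+1) → ℝ := fun i => iteratedDeriv (i : ℕ) μ x with hb
  -- the linear system from Leibniz' rule
  have hmul : M *ᵥ v = b := by
    funext i
    have hle : ((i : ℕ) : WithTop ℕ∞) ≤ (n : WithTop ℕ∞) := by
      exact_mod_cast Nat.lt_succ_iff.mp i.isLt
    have hL := leibniz_iteratedDeriv (i : ℕ) (fun t => μ t / ν t) ν
      (hfC.of_le hle) (hν.of_le hle) x
    have hfun : (fun t => (fun t => μ t / ν t) t * ν t) = μ := by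
      funext t; exact div_mul_cancel₀ _ (hne t)
    rw [hfun] at hL
    show ∑ j : Fin (n+1), M i j * v j = iteratedDeriv (i : ℕ) μ x
    rw [hL]
    have : ∑ j : Fin (n+1), M i j * v j
        = ∑ k ∈ Finset.range (n+1), ((i : ℕ).choose k : ℝ) *
            (iteratedDeriv k (fun t => μ t / ν t) x * iteratedDeriv ((i : ℕ) - k) ν x) := by
      rw [← Fin.sum_univ_eq_sum_range (fun k => ((i : ℕ).choose k : ℝ) *
        (iteratedDeriv k (fun t => μ t / ν t) x * iteratedDeriv ((i : ℕ) - k) ν x)) (n+1)]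
      refine Finset.sum_congr rfl fun j _ => by simp [hM, hv]; ring
    rw [this]
    refine (Finset.sum_subset (Finset.range_subset_range.mpr (by omega)) fun k _ hk => ?_).symm
    rw [Finset.mem_range, not_lt] at hk
    rw [Nat.choose_eq_zero_of_lt (by omega)]
    simp
  -- M is lower triangular with diagonal ν x
  have hdetM : M.det = ν x ^ (n+1) := by
    rw [Matrix.det_of_lowerTriangular M (fun i j hij => by
      have : (i : ℕ) < (j : ℕ) := hij
      simp [hM, Nat.choose_eq_zero_of_lt this])]
    simp [hM, Nat.choose_self]
  -- relate G to the Cramer matrix by a column rotation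
  have hGrot : M.updateCol (Fin.last n) b = G.submatrix id (finRotate (n+1)) := by
    ext i j
    rcases eq_or_ne j (Fin.last n) with rfl | hj
    · rw [Matrix.updateCol_self]
      simp [finRotate_last, hG, hb]
    · rw [Matrix.updateCol_ne hj]
      have hjn : (j : ℕ) < n := by
        rcases Fin.lt_last_iff_ne_last.mpr hj with h
        exact h
      simp only [Matrix.submatrix_apply, id_eq, finRotate_succ_apply]
      have hval : ((j + 1 : Fin (n+1)) : ℕ) = (j : ℕ) + 1 := Fin.val_add_one_of_lt
        (Fin.lt_last_iff_ne_last.mpr hj)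
      rw [hG]
      simp only [Matrix.of_apply, hval]
      simp [hM]
  have hsign : ((Equiv.Perm.sign (finRotate (n+1)) : ℤ) : ℝ) = (-1 : ℝ) ^ n := by
    rw [sign_finRotate]; push_cast; ring
  have hdet : G.det = (-1 : ℝ) ^ n * (M.det * v (Fin.last n)) := by
    have h1 : (M.updateCol (Fin.last n) b).det
        = (-1 : ℝ) ^ n * G.det := by
      rw [hGrot, Matrix.det_permute' (finRotate (n+1)) G, ← hsign]
    have h2 := cramer_like M v
    rw [hmul] at h2
    have hnn : ((-1 : ℝ) ^ n) * ((-1 : ℝ) ^ n) = 1 := by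
      rw [← pow_add]; exact (neg_one_pow_eq_one_iff_even (by norm_num)).mpr (Even.add_self n)
    calc G.det = ((-1:ℝ)^n * (-1:ℝ)^n) * G.det := by rw [hnn, one_mul]
    _ = (-1:ℝ)^n * ((M.updateCol (Fin.last n) b).det) := by rw [h1]; ring
    _ = (-1 : ℝ) ^ n * (M.det * v (Fin.last n)) := by rw [h2]
  rw [hdet, hdetM]
  have hvl : v (Fin.last n) = iteratedDeriv n (fun t => μ t / ν t) x := by
    simp [hv]
  rw [hvl]
  have hν0 : ν x ^ (n+1) ≠ 0 := pow_ne_zero _ (hne x)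
  have hnn : ((-1 : ℝ) ^ n) * ((-1 : ℝ) ^ n) = 1 := by
    rw [← pow_add]; exact (neg_one_pow_eq_one_iff_even (by norm_num)).mpr (Even.add_self n)
  field_simp
  linear_combination (-(iteratedDeriv n (fun t => μ t / ν t) x)) * hnn
end

section
/- Letting z = 1 in the Apostol–Bernoulli polynomial formula of Luo (valid formally), i.e., the Qi–Chapman closed form, recovers the Jeong–Kim–Son formula: for n ≥ 1, Σ_{i=1}^{n} (-1)^i (C(n+1,i+1)/C(n+i,i)) S(n+i,i) = n! Σ_{j=1}^{n} (-1)^j Σ over (i_1,…,i_n) with Σ i_t = j, Σ t·i_t = n of (j!/(i_1!⋯i_n!)) / (2!^{i_1} 3!^{i_2} ⋯ (n+1)!^{i_n}). -/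
open Finset

/-- Stirling numbers of the second kind, via the standard recurrence. -/
def stirling : ℕ → ℕ → ℕ
  | 0, 0 => 1
  | 0, _ + 1 => 0
  | _ + 1, 0 => 0
  | n + 1, k + 1 => (k + 1) * stirling n (k + 1) + stirling n k

/-- `cc j m` = coefficient of `x^m` in `((e^x - 1 - x)/x)^j`, i.e. the sum over
compositions of `m` into `j` parts `a ≥ 1` of `∏ 1/(a+1)!`. -/
def cc : ℕ → ℕ → ℚ
  | 0, m => if m = 0 then 1 else 0
  | j + 1, m => ∑ a ∈ Finset.range m, (1 / ((a + 2).factorial : ℚ)) * cc j (m - 1 - a)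

@[simp] lemma cc_zero (m : ℕ) : cc 0 m = if m = 0 then 1 else 0 := by rfl

lemma cc_succ (j m : ℕ) :
    cc (j + 1) m = ∑ a ∈ Finset.range m, (1 / ((a + 2).factorial : ℚ)) * cc j (m - 1 - a) := by
  rfl

@[simp] lemma cc_zero_right (j : ℕ) : cc j 0 = if j = 0 then 1 else 0 := by
  cases j with
  | zero => simp
  | succ j => simp [cc_succ]

lemma cc_eq_zero_of_lt : ∀ j m, m < j → cc j m = 0 := by
  intro j
  induction j with
  | zero => intro m h; omega
  | succ j ih =>
    intro m h
    rw [cc_succ]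
    refine Finset.sum_eq_zero fun a ha => ?_
    rw [ih _ (by simp at ha; omega), mul_zero]

lemma cc_one_succ (m : ℕ) : cc 1 (m + 1) = 1 / (((m + 2).factorial : ℚ)) := by
  rw [cc_succ]
  rw [Finset.sum_eq_single m]
  · simp
  · intro a ha hne
    have h2 : m + 1 - 1 - a ≠ 0 := by simp at ha; omega
    rw [cc_zero, if_neg h2, mul_zero]
  · intro h; simp at h

lemma cc_aux (j m : ℕ) :
    ∑ a ∈ Finset.range m, (1 / ((a + 1).factorial : ℚ)) * cc (j + 1) (m - a)
      = cc (j + 2) m + cc (j + 1) m := by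
  cases m with
  | zero => simp
  | succ m' =>
    rw [Finset.sum_range_succ']
    have h1 : ∑ a ∈ Finset.range m', (1 / ((a + 1 + 1).factorial : ℚ)) * cc (j + 1) (m' + 1 - (a + 1)) = cc (j + 2) (m' + 1) := by
      rw [cc_succ]
      rw [Finset.sum_range_succ]
      have : cc (j + 1) (m' + 1 - 1 - m') = 0 := by
        have : m' + 1 - 1 - m' = 0 := by omega
        rw [this]; simp
      rw [this, mul_zero, add_zero]
      refine Finset.sum_congr rfl fun a ha => ?_
      congr 2
      omega
    rw [h1]
    norm_num

lemma cc_key : ∀ j m : ℕ, ((m : ℚ) + j + 2) * cc (j + 1) (m + 1)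
    = (j + 1) * (cc (j + 1) m + cc j m) := by
  intro j
  induction j with
  | zero =>
    intro m
    rw [cc_one_succ]
    cases m with
    | zero => norm_num [Nat.factorial]
    | succ m' =>
      rw [cc_one_succ]
      simp only [cc_zero, Nat.succ_ne_zero, if_false, add_zero, Nat.cast_zero]
      have hfac : ((m' + 1 + 2).factorial : ℚ) = ((m' : ℚ) + 3) * ((m' + 2).factorial : ℚ) := by
        rw [show m' + 1 + 2 = (m' + 2) + 1 by omega, Nat.factorial_succ]
        push_cast
        ring
      have hne2 : ((m' + 2).factorial : ℚ) ≠ 0 := by positivity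
      rw [hfac]
      have h3 : ((m' : ℚ) + 3) ≠ 0 := by positivity
      push_cast
      rw [mul_one_div, mul_one_div, div_eq_div_iff (by positivity) (by positivity)]
      ring
  | succ j ih =>
    intro m
    push_cast
    rw [cc_succ (j + 1) (m + 1), Finset.mul_sum]
    rw [Finset.sum_range_succ]
    have htop : cc (j + 1) (m + 1 - 1 - m) = 0 := by
      have : m + 1 - 1 - m = 0 := by omega
      rw [this]; simp
    rw [htop, mul_zero, mul_zero, add_zero]
    have hsplit : ∀ a ∈ Finset.range m,
        ((m : ℚ) + (↑j + 1) + 2) * (1 / ((a + 2).factorial : ℚ) * cc (j + 1) (m + 1 - 1 - a))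
          = (1 / ((a + 2).factorial : ℚ)) * ((((m - 1 - a : ℕ) : ℚ) + j + 2) * cc (j + 1) ((m - 1 - a) + 1))
            + (1 / ((a + 1).factorial : ℚ)) * cc (j + 1) (m - a) := by
      intro a ha
      simp only [Finset.mem_range] at ha
      have h1 : m + 1 - 1 - a = m - a := by omega
      have h2 : m - 1 - a + 1 = m - a := by omega
      have h3 : ((m - 1 - a : ℕ) : ℚ) = (m : ℚ) - 1 - a := by
        have hh : (m - 1 - a : ℕ) + (1 + a) = m := by omega
        have := congrArg (fun x : ℕ => (x : ℚ)) hh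
        push_cast at this
        linarith
      have h4 : ((a + 2).factorial : ℚ) = ((a : ℚ) + 2) * ((a + 1).factorial : ℚ) := by
        rw [show a + 2 = (a + 1) + 1 by omega, Nat.factorial_succ]
        push_cast
        ring
      have hne : ((a + 1).factorial : ℚ) ≠ 0 := by positivity
      have ha2 : ((a : ℚ) + 2) ≠ 0 := by positivity
      rw [h1, h2, h3, h4]
      field_simp
      ring
    rw [Finset.sum_congr rfl hsplit, Finset.sum_add_distrib]
    have hA : ∑ a ∈ Finset.range m,
        (1 / ((a + 2).factorial : ℚ)) * ((((m - 1 - a : ℕ) : ℚ) + j + 2) * cc (j + 1) ((m - 1 - a) + 1))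
          = ((j : ℚ) + 1) * (cc (j + 2) m + cc (j + 1) m) := by
      have hterm : ∀ a ∈ Finset.range m,
          (1 / ((a + 2).factorial : ℚ)) * ((((m - 1 - a : ℕ) : ℚ) + j + 2) * cc (j + 1) ((m - 1 - a) + 1))
            = ((j : ℚ) + 1) * ((1 / ((a + 2).factorial : ℚ)) * cc (j + 1) (m - 1 - a))
              + ((j : ℚ) + 1) * ((1 / ((a + 2).factorial : ℚ)) * cc j (m - 1 - a)) := by
        intro a _
        rw [ih (m - 1 - a)]
        ring
      rw [Finset.sum_congr rfl hterm, Finset.sum_add_distrib, ← Finset.mul_sum, ← Finset.mul_sum,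
        ← cc_succ (j + 1) m, ← cc_succ j m]
      ring
    rw [hA, cc_aux j m]
    ring

/-- `t j m` corresponds to the number of partitions of an `(m+j)`-set into `j` blocks of size ≥ 2. -/
noncomputable def tt (j m : ℕ) : ℚ := ((m + j).factorial : ℚ) / (j.factorial : ℚ) * cc j m

lemma tt_zero_right (j : ℕ) : tt j 0 = if j = 0 then 1 else 0 := by
  unfold tt
  rcases Nat.eq_zero_or_pos j with h | h
  · subst h; simp [Nat.factorial]
  · rw [cc_zero_right, if_neg (show ¬ j = 0 by omega), mul_zero]

lemma tt_zero_left (m : ℕ) : tt 0 m = if m = 0 then 1 else 0 := by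
  unfold tt
  rcases Nat.eq_zero_or_pos m with h | h
  · subst h; simp [Nat.factorial]
  · rw [cc_zero, if_neg (show ¬ m = 0 by omega), mul_zero]

lemma tt_rec (j m : ℕ) :
    tt (j + 1) (m + 1) = ((j : ℚ) + 1) * tt (j + 1) m + ((m : ℚ) + 1 + j) * tt j m := by
  unfold tt
  have h1 : (m + 1 + (j + 1)) = (m + j + 1) + 1 := by omega
  have h2 : ((m + j + 1 + 1).factorial : ℚ)
      = (((m : ℚ) + j + 2)) * ((m + j + 1).factorial : ℚ) := by
    rw [Nat.factorial_succ]; push_cast; ring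
  have h3 : (m + (j + 1)) = m + j + 1 := by omega
  have h4 : ((j + 1).factorial : ℚ) = ((j : ℚ) + 1) * (j.factorial : ℚ) := by
    rw [Nat.factorial_succ]; push_cast; ring
  have h5 : ((m + j + 1).factorial : ℚ) = ((m : ℚ) + j + 1) * ((m + j).factorial : ℚ) := by
    rw [Nat.factorial_succ]; push_cast; ring
  rw [h1, h2, h3, h4]
  have key := cc_key j m
  have hjne : ((j.factorial : ℚ)) ≠ 0 := by positivity
  have hj1 : ((j : ℚ) + 1) ≠ 0 := by positivity
  calc ((m : ℚ) + j + 2) * ((m + j + 1).factorial : ℚ) / (((j : ℚ) + 1) * (j.factorial : ℚ))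
        * cc (j + 1) (m + 1)
      = ((m + j + 1).factorial : ℚ) / (((j : ℚ) + 1) * (j.factorial : ℚ))
        * (((m : ℚ) + j + 2) * cc (j + 1) (m + 1)) := by ring
    _ = ((m + j + 1).factorial : ℚ) / (((j : ℚ) + 1) * (j.factorial : ℚ))
        * (((j : ℚ) + 1) * (cc (j + 1) m + cc j m)) := by rw [key]
    _ = ((j : ℚ) + 1) * (((m + j + 1).factorial : ℚ) / (((j : ℚ) + 1) * (j.factorial : ℚ)) * cc (j + 1) m)
        + ((m + j + 1).factorial : ℚ) / (j.factorial : ℚ) * cc j m := by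
        field_simp
    _ = ((j : ℚ) + 1) * (((m + j + 1).factorial : ℚ) / (((j : ℚ) + 1) * (j.factorial : ℚ)) * cc (j + 1) m)
        + ((m : ℚ) + 1 + j) * (((m + j).factorial : ℚ) / (j.factorial : ℚ) * cc j m) := by
        rw [h5]; field_simp; ring

lemma stirling_zero_right (m : ℕ) : stirling m 0 = if m = 0 then 1 else 0 := by
  cases m <;> rfl

lemma stirling_eq_zero_of_lt : ∀ n k : ℕ, n < k → stirling n k = 0 := by
  intro n
  induction n with
  | zero =>
    intro k h
    cases k with
    | zero => omega
    | succ k => rfl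
  | succ n ih =>
    intro k h
    cases k with
    | zero => omega
    | succ k =>
      show (k + 1) * stirling n (k + 1) + stirling n k = 0
      rw [ih (k + 1) (by omega), ih k (by omega)]
      simp

lemma stirling_self : ∀ n : ℕ, stirling n n = 1 := by
  intro n
  induction n with
  | zero => rfl
  | succ n ih =>
    show (n + 1) * stirling n (n + 1) + stirling n n = 1
    rw [stirling_eq_zero_of_lt n (n + 1) (by omega), ih]
    simp

lemma stirling_decomp : ∀ k m : ℕ, (stirling (m + k) k : ℚ)
    = ∑ j ∈ Finset.range (k + 1), (((m + k).choose (k - j) : ℕ) : ℚ) * tt j m := by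
  intro k
  induction k with
  | zero =>
    intro m
    simp [stirling_zero_right, tt_zero_left]
  | succ k ihk =>
    intro m
    induction m with
    | zero =>
      rw [Nat.zero_add, stirling_self]
      rw [Finset.sum_eq_single 0]
      · simp [tt_zero_right]
      · intro j hj hne
        rw [tt_zero_right, if_neg hne, mul_zero]
      · intro h; simp at h
    | succ m ihm =>
      have hrec : (stirling (m + 1 + (k + 1)) (k + 1) : ℚ)
          = ((k : ℚ) + 1) * (stirling (m + (k + 1)) (k + 1) : ℚ) + (stirling (m + 1 + k) k : ℚ) := by
        have h1 : m + 1 + (k + 1) = (m + 1 + k) + 1 := by omega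
        have h2 : m + (k + 1) = m + 1 + k := by omega
        rw [h1, h2]
        show (((k + 1) * stirling (m + 1 + k) (k + 1) + stirling (m + 1 + k) k : ℕ) : ℚ) = _
        push_cast
        ring
      rw [hrec, ihm, ihk (m + 1)]
      set N := m + k + 1 with hN
      have hN1 : m + 1 + (k + 1) = N + 1 := by omega
      have hN2 : m + (k + 1) = N := by omega
      have hN3 : m + 1 + k = N := by omega
      rw [hN1, hN2, hN3]
      have hsplit : ∀ j ∈ Finset.range (k + 1),
          (((N + 1).choose (k + 1 - j) : ℕ) : ℚ) * tt j (m + 1)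
            = ((N.choose (k - j) : ℕ) : ℚ) * tt j (m + 1)
              + ((N.choose (k + 1 - j) : ℕ) : ℚ) * tt j (m + 1) := by
        intro j hj
        simp only [Finset.mem_range] at hj
        have h3 : k + 1 - j = (k - j) + 1 := by omega
        rw [h3, Nat.choose_succ_succ]
        push_cast
        ring
      rw [Finset.sum_range_succ (fun j => (((N + 1).choose (k + 1 - j) : ℕ) : ℚ) * tt j (m + 1))]
      rw [Finset.sum_congr rfl hsplit, Finset.sum_add_distrib]
      have htopeq : (((N + 1).choose (k + 1 - (k + 1)) : ℕ) : ℚ) * tt (k + 1) (m + 1)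
          = ((N.choose (k + 1 - (k + 1)) : ℕ) : ℚ) * tt (k + 1) (m + 1) := by
        simp
      rw [htopeq]
      rw [add_assoc (∑ x ∈ Finset.range (k + 1), ((N.choose (k - x) : ℕ) : ℚ) * tt x (m + 1))]
      rw [← Finset.sum_range_succ (fun j => ((N.choose (k + 1 - j) : ℕ) : ℚ) * tt j (m + 1))]
      have hstar : ∑ j ∈ Finset.range (k + 1 + 1), ((N.choose (k + 1 - j) : ℕ) : ℚ) * tt j (m + 1)
          = ((k : ℚ) + 1) * ∑ j ∈ Finset.range (k + 1 + 1), ((N.choose (k + 1 - j) : ℕ) : ℚ) * tt j m := by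
        rw [Finset.sum_range_succ' (fun j => ((N.choose (k + 1 - j) : ℕ) : ℚ) * tt j (m + 1))]
        have ht0 : tt 0 (m + 1) = 0 := by rw [tt_zero_left]; simp
        rw [ht0, mul_zero, add_zero]
        have hterm : ∀ j ∈ Finset.range (k + 1),
            ((N.choose (k + 1 - (j + 1)) : ℕ) : ℚ) * tt (j + 1) (m + 1)
              = ((j : ℚ) + 1) * (((N.choose (k - j) : ℕ) : ℚ) * tt (j + 1) m)
                + (((m : ℚ) + 1 + j) * ((N.choose (k - j) : ℕ) : ℚ)) * tt j m := by
          intro j hj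
          have h4 : k + 1 - (j + 1) = k - j := by omega
          rw [h4, tt_rec]
          ring
        rw [Finset.sum_congr rfl hterm, Finset.sum_add_distrib]
        have hchoose : ∀ j ∈ Finset.range (k + 1),
            (((m : ℚ) + 1 + j) * ((N.choose (k - j) : ℕ) : ℚ)) * tt j m
              = (((k : ℚ) + 1 - j) * ((N.choose (k + 1 - j) : ℕ) : ℚ)) * tt j m := by
          intro j hj
          simp only [Finset.mem_range] at hj
          have hc := Nat.choose_succ_right_eq N (k - j)
          have e1 : (k - j) + 1 = k + 1 - j := by omega
          have e2 : N - (k - j) = m + 1 + j := by omega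
          rw [e1, e2] at hc
          have hc' := congrArg (fun x : ℕ => (x : ℚ)) hc
          push_cast at hc'
          have e3 : ((k - j : ℕ) : ℚ) = (k : ℚ) - j := by
            have hh : (k - j : ℕ) + j = k := by omega
            have := congrArg (fun x : ℕ => (x : ℚ)) hh
            push_cast at this
            linarith
          have e4 : ((k + 1 - j : ℕ) : ℚ) = (k : ℚ) + 1 - j := by
            have hh : (k + 1 - j : ℕ) + j = k + 1 := by omega
            have := congrArg (fun x : ℕ => (x : ℚ)) hh
            push_cast at this
            linarith
          rw [e4] at hc'
          linear_combination (-(tt j m)) * hc'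
        rw [Finset.sum_congr rfl hchoose]
        -- now expand RHS
        rw [Finset.mul_sum]
        have hrhs : ∀ j ∈ Finset.range (k + 1 + 1),
            ((k : ℚ) + 1) * (((N.choose (k + 1 - j) : ℕ) : ℚ) * tt j m)
              = (j : ℚ) * (((N.choose (k + 1 - j) : ℕ) : ℚ) * tt j m)
                + (((k : ℚ) + 1 - j) * ((N.choose (k + 1 - j) : ℕ) : ℚ)) * tt j m := by
          intro j _
          ring
        rw [Finset.sum_congr rfl hrhs, Finset.sum_add_distrib]
        congr 1
        · -- first sums equal
          rw [Finset.sum_range_succ' (fun j => (j : ℚ) * (((N.choose (k + 1 - j) : ℕ) : ℚ) * tt j m))]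
          simp only [Nat.cast_zero, zero_mul, add_zero]
          refine Finset.sum_congr rfl fun j hj => ?_
          have h4 : k + 1 - (j + 1) = k - j := by omega
          rw [h4]
          push_cast
          ring
        · -- second sums equal
          simp only [Finset.sum_range_succ]
          have h0 : (((k : ℚ) + 1 - ((k + 1 : ℕ) : ℚ)) * ((N.choose (k + 1 - (k + 1)) : ℕ) : ℚ)) * tt (k + 1) m = 0 := by
            push_cast
            ring
          rw [h0, add_zero]
      rw [hstar]
      ring

lemma alt_zero (j N : ℕ) (hjN : j < N) :
    ∑ k ∈ Finset.Icc j N, (-1 : ℚ) ^ k * ((N.choose k : ℕ) : ℚ) * ((k.choose j : ℕ) : ℚ) = 0 := by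
  have hrw : ∀ k ∈ Finset.Icc j N,
      (-1 : ℚ) ^ k * ((N.choose k : ℕ) : ℚ) * ((k.choose j : ℕ) : ℚ)
        = ((N.choose j : ℕ) : ℚ) * ((-1 : ℚ) ^ k * (((N - j).choose (k - j) : ℕ) : ℚ)) := by
    intro k hk
    simp only [Finset.mem_Icc] at hk
    have := Nat.choose_mul (n := N) hk.1
    have hc := congrArg (fun x : ℕ => (x : ℚ)) this
    push_cast at hc
    rw [show (-1 : ℚ) ^ k * ((N.choose k : ℕ) : ℚ) * ((k.choose j : ℕ) : ℚ)
        = (-1 : ℚ) ^ k * (((N.choose k : ℕ) : ℚ) * ((k.choose j : ℕ) : ℚ)) by ring, hc]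
    ring
  rw [Finset.sum_congr rfl hrw, ← Finset.mul_sum]
  have hzero : ∑ k ∈ Finset.Icc j N, (-1 : ℚ) ^ k * (((N - j).choose (k - j) : ℕ) : ℚ) = 0 := by
    rw [← Finset.Ico_add_one_right_eq_Icc, Finset.sum_Ico_eq_sum_range]
    have hNj : N + 1 - j = (N - j) + 1 := by omega
    rw [hNj]
    have hstep : ∀ r ∈ Finset.range ((N - j) + 1),
        (-1 : ℚ) ^ (j + r) * (((N - j).choose (j + r - j) : ℕ) : ℚ)
          = (-1 : ℚ) ^ j * ((-1 : ℚ) ^ r * (((N - j).choose r : ℕ) : ℚ)) := by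
      intro r _
      have : j + r - j = r := by omega
      rw [this, pow_add]
      ring
    rw [Finset.sum_congr rfl hstep, ← Finset.mul_sum]
    have halt : ∑ r ∈ Finset.range ((N - j) + 1), (-1 : ℚ) ^ r * (((N - j).choose r : ℕ) : ℚ) = 0 := by
      have h1 := Int.alternating_sum_range_choose_of_ne (show N - j ≠ 0 by omega)
      have h2 := congrArg (fun z : ℤ => (z : ℚ)) h1
      push_cast at h2
      convert h2 using 2
    rw [halt, mul_zero]
  rw [hzero, mul_zero]

lemma alt_binom : ∀ n j : ℕ, j ≤ n →
    ∑ k ∈ Finset.Icc j n, (-1 : ℚ) ^ k * (((n + 1).choose (k + 1) : ℕ) : ℚ) * ((k.choose j : ℕ) : ℚ)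
      = (-1 : ℚ) ^ j := by
  intro n
  induction n with
  | zero =>
    intro j hj
    interval_cases j
    simp
  | succ n ih =>
    intro j hj
    rcases Nat.lt_or_ge j (n + 1) with hlt | hge
    · have hj' : j ≤ n := by omega
      have hpascal : ∀ k ∈ Finset.Icc j (n + 1),
          (-1 : ℚ) ^ k * (((n + 1 + 1).choose (k + 1) : ℕ) : ℚ) * ((k.choose j : ℕ) : ℚ)
            = (-1 : ℚ) ^ k * (((n + 1).choose (k + 1) : ℕ) : ℚ) * ((k.choose j : ℕ) : ℚ)
              + (-1 : ℚ) ^ k * (((n + 1).choose k : ℕ) : ℚ) * ((k.choose j : ℕ) : ℚ) := by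
        intro k _
        rw [Nat.choose_succ_succ (n + 1) k]
        push_cast
        ring
      rw [Finset.sum_congr rfl hpascal, Finset.sum_add_distrib]
      rw [alt_zero j (n + 1) hlt, add_zero]
      rw [Finset.sum_Icc_succ_top (by omega : j ≤ n + 1)]
      rw [Nat.choose_succ_self (n + 1)]
      push_cast
      rw [ih j hj']
      ring
    · have hje : j = n + 1 := by omega
      subst hje
      rw [Finset.Icc_self, Finset.sum_singleton, Nat.choose_self, Nat.choose_self]
      norm_num

noncomputable def PF (n : ℕ) : Polynomial ℚ :=
  ∑ t : Fin n, Polynomial.C (1 / (((t : ℕ) + 2).factorial : ℚ)) * Polynomial.X ^ ((t : ℕ) + 1)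

lemma PF_coeff (n a : ℕ) :
    (PF n).coeff a = if 1 ≤ a ∧ a ≤ n then 1 / (((a + 1).factorial : ℕ) : ℚ) else 0 := by
  unfold PF
  rw [Polynomial.finset_sum_coeff]
  simp only [Polynomial.coeff_C_mul, Polynomial.coeff_X_pow]
  cases a with
  | zero =>
    rw [Finset.sum_eq_zero]
    · simp
    · intro t _
      simp
  | succ b =>
    by_cases hb : b < n
    · rw [Finset.sum_eq_single (⟨b, hb⟩ : Fin n)]
      · have hle : b + 1 ≤ n := hb
        simp [hle]
      · intro t _ hne
        have : ¬ (b + 1 = (t : ℕ) + 1) := by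
          intro h
          apply hne
          have : (t : ℕ) = b := by omega
          exact Fin.ext this
        rw [if_neg (by omega), mul_zero]
      · intro h; simp at h
    · rw [Finset.sum_eq_zero]
      · have : ¬ (1 ≤ b + 1 ∧ b + 1 ≤ n) := by
          rintro ⟨-, h2⟩; omega
        rw [if_neg this]
      · intro t _
        have ht : (t : ℕ) < n := t.2
        rw [if_neg (by omega), mul_zero]

lemma PF_pow_coeff (n : ℕ) : ∀ j m : ℕ, m ≤ n → ((PF n) ^ j).coeff m = cc j m := by
  intro j
  induction j with
  | zero =>
    intro m _
    rw [pow_zero, Polynomial.coeff_one, cc_zero]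
  | succ j ih =>
    intro m hm
    rw [pow_succ', Polynomial.coeff_mul, Finset.Nat.sum_antidiagonal_eq_sum_range_succ_mk]
    rw [Finset.sum_range_succ']
    have h0 : (PF n).coeff 0 = 0 := by rw [PF_coeff]; simp
    rw [h0, zero_mul, add_zero]
    rw [cc_succ]
    refine Finset.sum_congr rfl fun a ha => ?_
    simp only [Finset.mem_range] at ha
    have hc : (PF n).coeff (a + 1) = 1 / (((a + 2).factorial : ℕ) : ℚ) := by
      rw [PF_coeff, if_pos ⟨by omega, by omega⟩]
    have he : m - (a + 1) = m - 1 - a := by omega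
    rw [hc, he, ih (m - 1 - a) (by omega)]

lemma PF_pow_coeff_multinomial (n j m : ℕ) :
    ((PF n) ^ j).coeff m = ∑ k ∈ Finset.piAntidiag (Finset.univ : Finset (Fin n)) j,
      (Nat.multinomial Finset.univ k : ℚ) *
        (∏ t : Fin n, (1 / (((t : ℕ) + 2).factorial : ℚ)) ^ (k t)) *
          (if m = (∑ t : Fin n, ((t : ℕ) + 1) * k t) then 1 else 0) := by
  unfold PF
  rw [Finset.sum_pow_eq_sum_piAntidiag, Polynomial.finset_sum_coeff]
  refine Finset.sum_congr rfl fun k _ => ?_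
  have hterm : ∀ t : Fin n,
      (Polynomial.C (1 / (((t : ℕ) + 2).factorial : ℚ)) * Polynomial.X ^ ((t : ℕ) + 1)) ^ (k t)
        = Polynomial.C ((1 / (((t : ℕ) + 2).factorial : ℚ)) ^ (k t))
            * Polynomial.X ^ (((t : ℕ) + 1) * k t) := by
    intro t
    rw [mul_pow, ← Polynomial.C_pow, ← pow_mul]
  rw [Finset.prod_congr rfl (fun t _ => hterm t), Finset.prod_mul_distrib, ← map_prod,
    Finset.prod_pow_eq_pow_sum]
  rw [show ((Nat.multinomial Finset.univ k : ℕ) : Polynomial ℚ)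
      = Polynomial.C ((Nat.multinomial Finset.univ k : ℕ) : ℚ) by
    rw [Polynomial.C_eq_natCast]]
  rw [← mul_assoc, ← Polynomial.C_mul, Polynomial.coeff_C_mul, Polynomial.coeff_X_pow]

lemma inner_sum_eq (n j m : ℕ) (hj : j ≤ n) (hm : m ≤ n) :
    (∑ i : Fin n → Fin (n + 1),
       if (∑ t : Fin n, (i t : ℕ)) = j ∧ (∑ t : Fin n, ((t : ℕ) + 1) * (i t : ℕ)) = m then
         (j.factorial : ℚ) / (∏ t : Fin n, ((i t : ℕ).factorial : ℚ)) /
           (∏ t : Fin n, (((t : ℕ) + 2).factorial : ℚ) ^ (i t : ℕ))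
       else 0)
      = cc j m := by
  rw [← PF_pow_coeff n j m hm, PF_pow_coeff_multinomial]
  simp only [ite_and]
  rw [← Finset.sum_filter]
  have hRHS : ∀ k ∈ Finset.piAntidiag (Finset.univ : Finset (Fin n)) j,
      (Nat.multinomial Finset.univ k : ℚ) *
          (∏ t : Fin n, (1 / (((t : ℕ) + 2).factorial : ℚ)) ^ (k t)) *
            (if m = (∑ t : Fin n, ((t : ℕ) + 1) * k t) then 1 else 0)
        = (if (∑ t : Fin n, ((t : ℕ) + 1) * k t) = m then
            (Nat.multinomial Finset.univ k : ℚ) *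
              (∏ t : Fin n, (1 / (((t : ℕ) + 2).factorial : ℚ)) ^ (k t)) else 0) := by
    intro k _
    rw [mul_ite, mul_one, mul_zero]
    congr 1
    simp [eq_comm]
  rw [Finset.sum_congr rfl hRHS]
  refine Finset.sum_bij' (i := fun (i : Fin n → Fin (n + 1)) _ => fun t => (i t : ℕ))
    (j := fun k hk => fun t => (⟨k t, ?_⟩ : Fin (n + 1))) ?_ ?_ ?_ ?_ ?_
  · -- k t < n + 1
    simp only [Finset.mem_piAntidiag] at hk
    have h1 : k t ≤ ∑ t' : Fin n, k t' :=
      Finset.single_le_sum (fun i _ => Nat.zero_le _) (Finset.mem_univ t)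
    have h2 : (∑ t' : Fin n, k t') = Finset.univ.sum k := rfl
    omega
  · -- hi : image in piAntidiag
    intro i hi
    simp only [Finset.mem_filter, Finset.mem_univ, true_and] at hi
    simp only [Finset.mem_piAntidiag]
    exact ⟨hi, fun t _ => Finset.mem_univ t⟩
  · -- hj : image in filter
    intro k hk
    simp only [Finset.mem_filter, Finset.mem_univ, true_and]
    simp only [Finset.mem_piAntidiag] at hk
    exact hk.1
  · intro i hi
    funext t
    rfl
  · intro k hk
    funext t
    rfl
  · -- values agree
    intro i hi
    simp only [Finset.mem_filter, Finset.mem_univ, true_and] at hi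
    congr 1
    have hprodne : (∏ t : Fin n, ((i t : ℕ).factorial : ℚ)) ≠ 0 := by
      apply Finset.prod_ne_zero_iff.mpr
      intro t _
      positivity
    have hmult : (Nat.multinomial Finset.univ (fun t => (i t : ℕ)) : ℚ)
        = (j.factorial : ℚ) / (∏ t : Fin n, ((i t : ℕ).factorial : ℚ)) := by
      rw [eq_div_iff hprodne]
      have hspec := Nat.multinomial_spec (Finset.univ : Finset (Fin n)) (fun t => (i t : ℕ))
      have := congrArg (fun x : ℕ => (x : ℚ)) hspec
      push_cast at this
      rw [hi] at this
      linarith [this]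
    rw [hmult]
    have hprod2 : (∏ t : Fin n, (1 / (((t : ℕ) + 2).factorial : ℚ)) ^ ((i t : ℕ)))
        = 1 / (∏ t : Fin n, (((t : ℕ) + 2).factorial : ℚ) ^ ((i t : ℕ))) := by
      rw [one_div, ← Finset.prod_inv_distrib]
      refine Finset.prod_congr rfl fun t _ => ?_
      rw [one_div, inv_pow]
    rw [hprod2]
    field_simp

theorem qiChapman_recovers_JeongKimSon (n : ℕ) (hn : 1 ≤ n) :
    (∑ i ∈ Finset.Icc 1 n,
        (-1 : ℚ) ^ i * (((n + 1).choose (i + 1) : ℚ) / ((n + i).choose i : ℚ)) *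
          (stirling (n + i) i : ℚ)) =
      (n.factorial : ℚ) * ∑ j ∈ Finset.Icc 1 n, (-1 : ℚ) ^ j *
        ∑ i : Fin n → Fin (n + 1),
          if (∑ t : Fin n, (i t : ℕ)) = j ∧ (∑ t : Fin n, ((t : ℕ) + 1) * (i t : ℕ)) = n then
            (j.factorial : ℚ) / (∏ t : Fin n, ((i t : ℕ).factorial : ℚ)) /
              (∏ t : Fin n, (((t : ℕ) + 2).factorial : ℚ) ^ (i t : ℕ))
          else 0 := by
  -- RHS simplification
  have hRHSinner : ∀ j ∈ Finset.Icc 1 n,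
      (-1 : ℚ) ^ j *
        (∑ i : Fin n → Fin (n + 1),
          if (∑ t : Fin n, (i t : ℕ)) = j ∧ (∑ t : Fin n, ((t : ℕ) + 1) * (i t : ℕ)) = n then
            (j.factorial : ℚ) / (∏ t : Fin n, ((i t : ℕ).factorial : ℚ)) /
              (∏ t : Fin n, (((t : ℕ) + 2).factorial : ℚ) ^ (i t : ℕ))
          else 0)
      = (-1 : ℚ) ^ j * cc j n := by
    intro j hj
    simp only [Finset.mem_Icc] at hj
    rw [inner_sum_eq n j n hj.2 le_rfl]
  rw [Finset.sum_congr rfl hRHSinner]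
  -- the per-(k,j) term
  set F : ℕ → ℕ → ℚ := fun k j => (-1 : ℚ) ^ k * (((n + 1).choose (k + 1) : ℕ) : ℚ)
      * ((k.choose j : ℕ) : ℚ)
      * ((j.factorial : ℚ) * (n.factorial : ℚ) / ((n + j).factorial : ℚ)) * tt j n with hF
  -- Step A+B : rewrite LHS terms
  have hstepAB : ∀ k ∈ Finset.Icc 1 n,
      (-1 : ℚ) ^ k * (((n + 1).choose (k + 1) : ℚ) / ((n + k).choose k : ℚ)) *
          (stirling (n + k) k : ℚ)
        = ∑ j ∈ Finset.range (n + 1), (if j ≤ k then F k j else 0) := by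
    intro k hk
    simp only [Finset.mem_Icc] at hk
    rw [← Finset.sum_filter]
    have hfil : (Finset.range (n + 1)).filter (fun j => j ≤ k) = Finset.range (k + 1) := by
      ext x
      simp only [Finset.mem_filter, Finset.mem_range, Nat.lt_succ_iff]
      omega
    rw [hfil]
    rw [stirling_decomp k n, Finset.mul_sum]
    refine Finset.sum_congr rfl fun j hj => ?_
    simp only [Finset.mem_range, Nat.lt_succ_iff] at hj
    -- coefficient identity
    have h1 : k - j ≤ n + k := by omega
    have h2 : k ≤ n + k := by omega
    have e1 : n + k - (k - j) = n + j := by omega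
    have e2 : n + k - k = n := by omega
    have hckj : ((k.choose j : ℕ) : ℚ) * (j.factorial : ℚ) * ((k - j).factorial : ℚ)
        = (k.factorial : ℚ) := by
      have := congrArg (fun x : ℕ => (x : ℚ)) (Nat.choose_mul_factorial_mul_factorial hj)
      push_cast at this
      linarith [this]
    have hcoef : (((n + 1).choose (k + 1) : ℚ) / ((n + k).choose k : ℚ))
          * (((n + k).choose (k - j) : ℕ) : ℚ)
        = (((n + 1).choose (k + 1) : ℕ) : ℚ) * ((k.choose j : ℕ) : ℚ)
          * ((j.factorial : ℚ) * (n.factorial : ℚ) / ((n + j).factorial : ℚ)) := by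
      rw [Nat.cast_choose ℚ h1, Nat.cast_choose ℚ h2, e1, e2]
      rw [← hckj]
      have hx1 : ((n + k).factorial : ℚ) ≠ 0 := by positivity
      have hx2 : ((k - j).factorial : ℚ) ≠ 0 := by positivity
      have hx3 : ((n + j).factorial : ℚ) ≠ 0 := by positivity
      have hx4 : ((n).factorial : ℚ) ≠ 0 := by positivity
      have hx5 : ((j).factorial : ℚ) ≠ 0 := by positivity
      have hx6 : ((k.choose j : ℕ) : ℚ) ≠ 0 := by
        have := Nat.choose_pos hj
        positivity
      field_simp
    rw [hF]
    simp only []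
    rw [show (-1 : ℚ) ^ k * (((n + 1).choose (k + 1) : ℚ) / ((n + k).choose k : ℚ))
        * ((((n + k).choose (k - j) : ℕ) : ℚ) * tt j n)
      = (-1 : ℚ) ^ k * ((((n + 1).choose (k + 1) : ℚ) / ((n + k).choose k : ℚ))
        * (((n + k).choose (k - j) : ℕ) : ℚ)) * tt j n by ring, hcoef]
    ring
  rw [Finset.sum_congr rfl hstepAB]
  rw [Finset.sum_comm]
  -- now evaluate inner sums over k
  have hstepD : ∀ j ∈ Finset.range (n + 1),
      (∑ k ∈ Finset.Icc 1 n, if j ≤ k then F k j else 0)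
        = (if 1 ≤ j then (-1 : ℚ) ^ j * ((n.factorial : ℚ) * cc j n) else 0) := by
    intro j hjmem
    simp only [Finset.mem_range, Nat.lt_succ_iff] at hjmem
    rcases Nat.eq_zero_or_pos j with hj0 | hjpos
    · subst hj0
      rw [if_neg (by omega)]
      refine Finset.sum_eq_zero fun k _ => ?_
      have : F k 0 = 0 := by
        rw [hF]
        simp only []
        rw [tt_zero_left, if_neg (by omega), mul_zero]
      rw [this, ite_self]
    · rw [if_pos (show 1 ≤ j from hjpos)]
      rw [← Finset.sum_filter]
      have hfil2 : (Finset.Icc 1 n).filter (fun k => j ≤ k) = Finset.Icc j n := by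
        ext x
        simp only [Finset.mem_filter, Finset.mem_Icc]
        omega
      rw [hfil2]
      have hfac : ∀ k ∈ Finset.Icc j n, F k j
          = ((-1 : ℚ) ^ k * (((n + 1).choose (k + 1) : ℕ) : ℚ) * ((k.choose j : ℕ) : ℚ))
            * (((j.factorial : ℚ) * (n.factorial : ℚ) / ((n + j).factorial : ℚ)) * tt j n) := by
        intro k _
        rw [hF]
        ring
      rw [Finset.sum_congr rfl hfac, ← Finset.sum_mul, alt_binom n j hjmem]
      rw [tt]
      have hy1 : ((n + j).factorial : ℚ) ≠ 0 := by positivity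
      have hy2 : ((j).factorial : ℚ) ≠ 0 := by positivity
      field_simp
  rw [Finset.sum_congr rfl hstepD]
  -- final bookkeeping
  have hins : Finset.range (n + 1) = insert 0 (Finset.Icc 1 n) := by
    ext x
    simp only [Finset.mem_range, Finset.mem_insert, Finset.mem_Icc, Nat.lt_succ_iff]
    omega
  rw [hins, Finset.sum_insert (by simp)]
  rw [if_neg (by omega), zero_add]
  rw [Finset.mul_sum]
  refine Finset.sum_congr rfl fun j hj => ?_
  simp only [Finset.mem_Icc] at hj
  rw [if_pos hj.1]
  ring
end
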